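/- arXiv:1003.0108 — 2 statements merged into one kernel-verified Lean document; each statement's English description precedes it below -/
import Mathlib

section
/- Let P, C be matrices over the field of fractions of a commutative integral domain R with normalized coprime factorizations P = NM⁻¹ and C = M̃_c⁻¹Ñ_c. Then the closed-loop transfer matrix H(P,C) = [P; I](I−CP)⁻¹[−C I] equals G(K̃G)⁻¹K̃, where G = [N; M] and K̃ = [−Ñ_c M̃_c], assuming I − CP and K̃G are invertible. -/
open Matrix in
/-- The closed-loop transfer matrix `H(P,C) = [P; I](I−CP)⁻¹[−C I]` equals
`G (K̃ G)⁻¹ K̃` where `G = [N; M]` and `K̃ = [−Ñ_c M̃_c]`, for a plant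
`P = N M⁻¹` and a controller `C = M̃_c⁻¹ Ñ_c` with matrices over a commutative
integral domain `R`, viewed over its field of fractions. -/
theorem closed_loop_formula
    {R : Type*} [CommRing R] [IsDomain R] {p m : ℕ}
    (N : Matrix (Fin p) (Fin m) R) (M : Matrix (Fin m) (Fin m) R)
    (Nc : Matrix (Fin m) (Fin p) R) (Mc : Matrix (Fin m) (Fin m) R)
    (P : Matrix (Fin p) (Fin m) (FractionRing R))
    (C : Matrix (Fin m) (Fin p) (FractionRing R))
    (hM : IsUnit (M.map (algebraMap R (FractionRing R))))
    (hMc : IsUnit (Mc.map (algebraMap R (FractionRing R))))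
    (hP : P = N.map (algebraMap R (FractionRing R)) *
      (M.map (algebraMap R (FractionRing R)))⁻¹)
    (hC : C = (Mc.map (algebraMap R (FractionRing R)))⁻¹ *
      Nc.map (algebraMap R (FractionRing R)))
    (h1 : IsUnit (1 - C * P))
    (h2 : IsUnit (Matrix.fromCols (-(Nc.map (algebraMap R (FractionRing R))))
        (Mc.map (algebraMap R (FractionRing R))) *
      Matrix.fromRows (N.map (algebraMap R (FractionRing R)))
        (M.map (algebraMap R (FractionRing R))))) :
    Matrix.fromRows P (1 : Matrix (Fin m) (Fin m) (FractionRing R)) *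
        (1 - C * P)⁻¹ * Matrix.fromCols (-C) 1 =
      Matrix.fromRows (N.map (algebraMap R (FractionRing R)))
          (M.map (algebraMap R (FractionRing R))) *
        (Matrix.fromCols (-(Nc.map (algebraMap R (FractionRing R))))
            (Mc.map (algebraMap R (FractionRing R))) *
          Matrix.fromRows (N.map (algebraMap R (FractionRing R)))
            (M.map (algebraMap R (FractionRing R))))⁻¹ *
        Matrix.fromCols (-(Nc.map (algebraMap R (FractionRing R))))
          (Mc.map (algebraMap R (FractionRing R))) := by
  set N' := N.map (algebraMap R (FractionRing R)) with hN'
  set M' := M.map (algebraMap R (FractionRing R)) with hM'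
  set Nc' := Nc.map (algebraMap R (FractionRing R)) with hNc'
  set Mc' := Mc.map (algebraMap R (FractionRing R)) with hMc'
  have hMinv : M' * M'⁻¹ = 1 := mul_nonsing_inv _ ((isUnit_iff_isUnit_det _).mp hM)
  have hMinv' : M'⁻¹ * M' = 1 := nonsing_inv_mul _ ((isUnit_iff_isUnit_det _).mp hM)
  have hMcinv : Mc'⁻¹ * Mc' = 1 := nonsing_inv_mul _ ((isUnit_iff_isUnit_det _).mp hMc)
  have hMcinvr : Mc' * Mc'⁻¹ = 1 := mul_nonsing_inv _ ((isUnit_iff_isUnit_det _).mp hMc)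
  have hMcC : Mc' * C = Nc' := by
    rw [hC, ← Matrix.mul_assoc, hMcinvr, Matrix.one_mul]
  have hPM : P * M' = N' := by
    rw [hP, Matrix.mul_assoc, hMinv', Matrix.mul_one]
  have key : fromCols (-Nc') Mc' * fromRows N' M' = Mc' * (1 - C * P) * M' := by
    rw [fromCols_mul_fromRows, Matrix.mul_sub, Matrix.mul_one, Matrix.sub_mul,
      ← Matrix.mul_assoc Mc' C P, hMcC,
      Matrix.mul_assoc Nc' P M', hPM, Matrix.neg_mul]
    abel
  have hinv : (fromCols (-Nc') Mc' * fromRows N' M')⁻¹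
      = M'⁻¹ * ((1 - C * P)⁻¹ * Mc'⁻¹) := by
    rw [key, Matrix.mul_inv_rev, Matrix.mul_inv_rev]
  conv_rhs => rw [hinv]
  have assoc : fromRows N' M' * (M'⁻¹ * ((1 - C * P)⁻¹ * Mc'⁻¹)) * fromCols (-Nc') Mc'
      = (fromRows N' M' * M'⁻¹) * (1 - C * P)⁻¹ * (Mc'⁻¹ * fromCols (-Nc') Mc') := by
    simp only [Matrix.mul_assoc]
  rw [assoc]
  conv_rhs => rw [fromRows_mul, hMinv, ← hP, mul_fromCols, Matrix.mul_neg, ← hC, hMcinv]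
end

section
/- Suppose G ∈ ℂ^{(p+m)×m} satisfies G*G = I_m and K̃ ∈ ℂ^{m×(p+m)} satisfies K̃K̃* = I_m, and K̃G is invertible. Then the operator norm of G(K̃G)⁻¹K̃ equals 1/σ̲(K̃G), where σ̲ denotes the smallest singular value. -/
open Matrix


/-- The largest singular value of a complex matrix: the operator norm of the induced
map between Euclidean spaces, i.e. the sup of `‖M x‖` over unit vectors `x`. -/
noncomputable def sigmaMax {n m : Type*} [Fintype n] [Fintype m] [DecidableEq m]
    (M : Matrix n m ℂ) : ℝ :=
  sSup {r : ℝ | ∃ x : EuclideanSpace ℂ m, ‖x‖ = 1 ∧ r = ‖Matrix.toEuclideanLin M x‖}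

/-- The smallest singular value of a complex matrix: the inf of `‖M x‖` over unit
vectors `x` (equivalently, the square root of the smallest eigenvalue of `Mᴴ M`). -/
noncomputable def sigmaMin {n m : Type*} [Fintype n] [Fintype m] [DecidableEq m]
    (M : Matrix n m ℂ) : ℝ :=
  sInf {r : ℝ | ∃ x : EuclideanSpace ℂ m, ‖x‖ = 1 ∧ r = ‖Matrix.toEuclideanLin M x‖}




namespace SigmaAux

variable {n m k : Type*} [Fintype n] [Fintype m] [Fintype k]
  [DecidableEq n] [DecidableEq m] [DecidableEq k]

lemma toE_mul (M : Matrix n m ℂ) (N : Matrix m k ℂ) (x : EuclideanSpace ℂ k) :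
    Matrix.toEuclideanLin (M * N) x
      = Matrix.toEuclideanLin M (Matrix.toEuclideanLin N x) := by
  simp [Matrix.toEuclideanLin_apply, Matrix.mulVec_mulVec]

lemma toE_one (x : EuclideanSpace ℂ m) :
    Matrix.toEuclideanLin (1 : Matrix m m ℂ) x = x := by
  simp [Matrix.toEuclideanLin_apply]

lemma norm_toE_isometry (G : Matrix n m ℂ) (hG : Gᴴ * G = 1) (x : EuclideanSpace ℂ m) :
    ‖Matrix.toEuclideanLin G x‖ = ‖x‖ := by
  have h : (inner ℂ (Matrix.toEuclideanLin G x) (Matrix.toEuclideanLin G x) : ℂ)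
      = inner ℂ x x := by
    rw [← LinearMap.adjoint_inner_left, ← Matrix.toEuclideanLin_conjTranspose_eq_adjoint,
      ← toE_mul, hG, toE_one]
  rw [@norm_eq_sqrt_re_inner ℂ, @norm_eq_sqrt_re_inner ℂ _ _ _ _ x, h]

lemma norm_toE_contraction (Kt : Matrix m n ℂ) (hK : Kt * Ktᴴ = 1)
    (x : EuclideanSpace ℂ n) : ‖Matrix.toEuclideanLin Kt x‖ ≤ ‖x‖ := by
  set y := Matrix.toEuclideanLin Kt x with hy
  have hiso : ‖Matrix.toEuclideanLin Ktᴴ y‖ = ‖y‖ :=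
    norm_toE_isometry Ktᴴ (by rw [Matrix.conjTranspose_conjTranspose, hK]) y
  have h1 : (inner ℂ y y : ℂ) = inner ℂ (Matrix.toEuclideanLin Ktᴴ y) x := by
    rw [Matrix.toEuclideanLin_conjTranspose_eq_adjoint, LinearMap.adjoint_inner_left]
  have h2 : ‖y‖ ^ 2 ≤ ‖y‖ * ‖x‖ := by
    calc ‖y‖ ^ 2 = Complex.re (inner ℂ y y : ℂ) := (by exact (inner_self_eq_norm_sq (𝕜 := ℂ) y).symm)
      _ ≤ ‖(inner ℂ (Matrix.toEuclideanLin Ktᴴ y) x : ℂ)‖ := by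
          rw [h1]; exact Complex.re_le_norm _
      _ ≤ ‖Matrix.toEuclideanLin Ktᴴ y‖ * ‖x‖ := norm_inner_le_norm _ _
      _ = ‖y‖ * ‖x‖ := by rw [hiso]
  nlinarith [norm_nonneg y, norm_nonneg x]

lemma norm_toE_le_of_sphere (M : Matrix n m ℂ) {R : ℝ}
    (hR : ∀ y : EuclideanSpace ℂ m, ‖y‖ = 1 → ‖Matrix.toEuclideanLin M y‖ ≤ R)
    (v : EuclideanSpace ℂ m) : ‖Matrix.toEuclideanLin M v‖ ≤ R * ‖v‖ := by
  rcases eq_or_ne v 0 with rfl | hv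
  · simp
  · have hnv : (0:ℝ) < ‖v‖ := norm_pos_iff.mpr hv
    have hu : ‖((‖v‖:ℂ)⁻¹ • v : EuclideanSpace ℂ m)‖ = 1 := by
      rw [norm_smul]
      simp [hnv.ne']
    have := hR _ hu
    rw [LinearMap.map_smul, norm_smul] at this
    have h2 : ‖((‖v‖:ℂ)⁻¹)‖ = ‖v‖⁻¹ := by
      simp
    rw [h2] at this
    calc ‖Matrix.toEuclideanLin M v‖ = (‖v‖⁻¹ * ‖Matrix.toEuclideanLin M v‖) * ‖v‖ := by
          field_simp
      _ ≤ R * ‖v‖ := by nlinarith [norm_nonneg (Matrix.toEuclideanLin M v)]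

lemma exists_max_on_sphere (M : Matrix n m ℂ) [Nonempty m] :
    ∃ x : EuclideanSpace ℂ m, ‖x‖ = 1 ∧
      ∀ y : EuclideanSpace ℂ m, ‖y‖ = 1 → ‖Matrix.toEuclideanLin M y‖
        ≤ ‖Matrix.toEuclideanLin M x‖ := by
  have hne : (Metric.sphere (0 : EuclideanSpace ℂ m) 1).Nonempty :=
    NormedSpace.sphere_nonempty.mpr zero_le_one
  have hcont : Continuous fun y : EuclideanSpace ℂ m => ‖Matrix.toEuclideanLin M y‖ :=
    ((Matrix.toEuclideanLin M).continuous_of_finiteDimensional).norm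
  obtain ⟨x, hx, hmax⟩ := (isCompact_sphere (0 : EuclideanSpace ℂ m) 1).exists_isMaxOn hne
    hcont.continuousOn
  refine ⟨x, by simpa using hx, fun y hy => hmax (by simpa using hy)⟩

lemma exists_min_on_sphere (M : Matrix n m ℂ) [Nonempty m] :
    ∃ x : EuclideanSpace ℂ m, ‖x‖ = 1 ∧
      ∀ y : EuclideanSpace ℂ m, ‖y‖ = 1 → ‖Matrix.toEuclideanLin M x‖
        ≤ ‖Matrix.toEuclideanLin M y‖ := by
  have hne : (Metric.sphere (0 : EuclideanSpace ℂ m) 1).Nonempty :=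
    NormedSpace.sphere_nonempty.mpr zero_le_one
  have hcont : Continuous fun y : EuclideanSpace ℂ m => ‖Matrix.toEuclideanLin M y‖ :=
    ((Matrix.toEuclideanLin M).continuous_of_finiteDimensional).norm
  obtain ⟨x, hx, hmin⟩ := (isCompact_sphere (0 : EuclideanSpace ℂ m) 1).exists_isMinOn hne
    hcont.continuousOn
  refine ⟨x, by simpa using hx, fun y hy => hmin (by simpa using hy)⟩

end SigmaAux

open SigmaAux in
open Matrix in
theorem sigmaMax_closed_loop {p m : ℕ}
    (G : Matrix (Fin (p + m)) (Fin m) ℂ) (Kt : Matrix (Fin m) (Fin (p + m)) ℂ)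
    (hG : Gᴴ * G = 1) (hK : Kt * Ktᴴ = 1) (hKG : IsUnit (Kt * G)) :
    sigmaMax (G * (Kt * G)⁻¹ * Kt) = 1 / sigmaMin (Kt * G) := by
  rcases Nat.eq_zero_or_pos m with hm | hm
  · -- degenerate case m = 0
    subst hm
    have hempty : {r : ℝ | ∃ x : EuclideanSpace ℂ (Fin 0), ‖x‖ = 1 ∧
        r = ‖Matrix.toEuclideanLin (Kt * G) x‖} = ∅ := by
      ext r
      simp only [Set.mem_setOf_eq, Set.mem_empty_iff_false, iff_false]
      rintro ⟨x, hx, -⟩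
      have : x = 0 := Subsingleton.elim x 0
      rw [this] at hx
      simp at hx
    have hmin0 : sigmaMin (Kt * G) = 0 := by
      rw [sigmaMin, hempty, Real.sInf_empty]
    rw [hmin0, div_zero]
    have hzero : ∀ x : EuclideanSpace ℂ (Fin (p + 0)),
        Matrix.toEuclideanLin (G * (Kt * G)⁻¹ * Kt) x = 0 := by
      intro x
      rw [toE_mul, toE_mul]
      have : Matrix.toEuclideanLin Kt x = 0 := Subsingleton.elim _ 0
      rw [this, map_zero, map_zero]
    have hsub : {r : ℝ | ∃ x : EuclideanSpace ℂ (Fin (p + 0)), ‖x‖ = 1 ∧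
        r = ‖Matrix.toEuclideanLin (G * (Kt * G)⁻¹ * Kt) x‖} ⊆ {0} := by
      rintro r ⟨x, -, rfl⟩
      simp [hzero x]
    rw [sigmaMax]
    rcases Set.subset_singleton_iff_eq.mp hsub with h | h
    · rw [h, Real.sSup_empty]
    · rw [h, csSup_singleton]
  · -- main case m ≥ 1
    haveI : Nonempty (Fin m) := ⟨⟨0, hm⟩⟩
    set A := Kt * G with hAdef
    set B := A⁻¹ with hBdef
    have hdet : IsUnit A.det := (Matrix.isUnit_iff_isUnit_det A).mp hKG
    have hAB : A * B = 1 := Matrix.mul_nonsing_inv A hdet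
    have hBA : B * A = 1 := Matrix.nonsing_inv_mul A hdet
    obtain ⟨x₀, hx₀, hminx⟩ := exists_min_on_sphere A
    obtain ⟨y₀, hy₀, hmaxy⟩ := exists_max_on_sphere B
    set rmin := ‖Matrix.toEuclideanLin A x₀‖ with hrm0
    set R := ‖Matrix.toEuclideanLin B y₀‖ with hRdef
    -- rmin > 0
    have hrpos : 0 < rmin := by
      rcases (norm_nonneg (Matrix.toEuclideanLin A x₀)).lt_or_eq with h | h
      · exact h
      · exfalso
        have hz : Matrix.toEuclideanLin A x₀ = 0 := norm_eq_zero.mp h.symm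
        have : x₀ = 0 := by
          have h1 : Matrix.toEuclideanLin (B * A) x₀ = 0 := by
            rw [toE_mul, hz, map_zero]
          rwa [hBA, toE_one] at h1
        rw [this] at hx₀; simp at hx₀
    -- R = rmin⁻¹
    have hR : R = rmin⁻¹ := by
      have hge : rmin⁻¹ ≤ R := by
        set z : EuclideanSpace ℂ (Fin m) :=
          ((rmin⁻¹ : ℝ) : ℂ) • Matrix.toEuclideanLin A x₀ with hz
        have hznorm : ‖z‖ = 1 := by
          rw [hz, norm_smul]
          simp only [Complex.norm_real, Real.norm_eq_abs, abs_of_pos (inv_pos.mpr hrpos)]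
          field_simp; rfl
        have hBz : Matrix.toEuclideanLin B z = ((rmin⁻¹ : ℝ) : ℂ) • x₀ := by
          rw [hz, LinearMap.map_smul, ← toE_mul, hBA, toE_one]
        have := hmaxy z hznorm
        rw [hBz, norm_smul] at this
        simpa [hx₀, abs_inv, abs_of_pos hrpos] using this
      have hle : R ≤ rmin⁻¹ := by
        set w := Matrix.toEuclideanLin B y₀ with hw
        have hAw : Matrix.toEuclideanLin A w = y₀ := by
          rw [hw, ← toE_mul, hAB, toE_one]
        have hwne : w ≠ 0 := by
          intro h
          rw [h, map_zero] at hAw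
          rw [← hAw] at hy₀; simp at hy₀
        have hwpos : (0:ℝ) < ‖w‖ := norm_pos_iff.mpr hwne
        set u : EuclideanSpace ℂ (Fin m) := ((‖w‖⁻¹ : ℝ) : ℂ) • w with hu
        have hunorm : ‖u‖ = 1 := by
          rw [hu, norm_smul]
          simp only [Complex.norm_real, Real.norm_eq_abs, abs_of_pos (inv_pos.mpr hwpos)]
          field_simp
        have h1 : rmin ≤ ‖Matrix.toEuclideanLin A u‖ := hminx u hunorm
        have h2 : ‖Matrix.toEuclideanLin A u‖ = ‖w‖⁻¹ := by
          rw [hu, LinearMap.map_smul, norm_smul, hAw, hy₀]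
          simp [abs_of_pos (inv_pos.mpr hwpos)]
        rw [h2] at h1
        rw [hRdef, ← inv_inv ‖w‖]
        exact inv_anti₀ hrpos h1
      linarith
    -- sigmaMin A = rmin
    have hsmin : sigmaMin A = rmin := by
      apply IsLeast.csInf_eq
      constructor
      · exact ⟨x₀, hx₀, rfl⟩
      · rintro r ⟨y, hy, rfl⟩
        exact hminx y hy
    -- sigmaMax of the closed loop = R
    have hsmax : sigmaMax (G * B * Kt) = R := by
      apply IsGreatest.csSup_eq
      constructor
      · refine ⟨Matrix.toEuclideanLin Ktᴴ y₀, ?_, ?_⟩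
        · exact (norm_toE_isometry Ktᴴ
            (by rw [Matrix.conjTranspose_conjTranspose, hK]) y₀).trans hy₀
        · have h1 : Matrix.toEuclideanLin Kt (Matrix.toEuclideanLin Ktᴴ y₀) = y₀ := by
            rw [← toE_mul, hK, toE_one]
          rw [toE_mul, toE_mul, h1,
            norm_toE_isometry G hG]
      · rintro r ⟨x, hx, rfl⟩
        have h1 : Matrix.toEuclideanLin (G * B * Kt) x
            = Matrix.toEuclideanLin G
              (Matrix.toEuclideanLin B (Matrix.toEuclideanLin Kt x)) := by
          rw [toE_mul, toE_mul]
        rw [h1, norm_toE_isometry G hG]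
        have h2 : ‖Matrix.toEuclideanLin B (Matrix.toEuclideanLin Kt x)‖
            ≤ R * ‖Matrix.toEuclideanLin Kt x‖ :=
          norm_toE_le_of_sphere B (fun y hy => hmaxy y hy) _
        have h3 : ‖Matrix.toEuclideanLin Kt x‖ ≤ 1 := by
          have := norm_toE_contraction Kt hK x
          rwa [hx] at this
        have hRnn : 0 ≤ R := norm_nonneg _
        nlinarith
    rw [hsmax, hsmin, hR, one_div]
end
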